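/- Fix m ≥ 1 and let L = so(3,ℝ)^m be the direct product of m copies of the Lie algebra of 3×3 real skew-symmetric matrices, with componentwise bracket. For i ∈ {1,…,m} let L_i ⊆ L denote the i-th coordinate factor, i.e., L_i = {x ∈ L : x_j = 0 for all j ≠ i}. If K is a Lie subalgebra of L with dim K = 3 whose centralizer {y ∈ L : [y,k] = 0 for all k ∈ K} has dimension 3(m−1), then K = L_i for some i. -/

import Mathlib

open Matrix DirectSum

attribute [local instance 100] LieRing.ofAssociativeRing

/-- `so(3,ℝ)`: the Lie algebra of `3×3` real skew-symmetric matrices, as a Lie subalgebra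
of the matrix algebra with the commutator bracket. -/
def so3 : LieSubalgebra ℝ (Matrix (Fin 3) (Fin 3) ℝ) :=
  { carrier := {A : Matrix (Fin 3) (Fin 3) ℝ | Aᵀ = -A}
    add_mem' := by
      intro A B hA hB
      simp only [Set.mem_setOf_eq] at *
      rw [Matrix.transpose_add, hA, hB, neg_add]
    zero_mem' := by
      simp only [Set.mem_setOf_eq, Matrix.transpose_zero, neg_zero]
    smul_mem' := by
      intro c A hA
      simp only [Set.mem_setOf_eq] at *
      rw [Matrix.transpose_smul, hA, smul_neg]
    lie_mem' := by
      intro A B hA hB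
      simp only [Set.mem_setOf_eq] at *
      rw [Ring.lie_def, Matrix.transpose_sub, Matrix.transpose_mul, Matrix.transpose_mul,
        hA, hB, neg_mul_neg, neg_mul_neg, neg_sub] }

/-- The `i`-th coordinate factor `L_i = {x : x_j = 0 for j ≠ i}` of the direct product of
`m` copies of `so(3,ℝ)`, as a Lie subalgebra. -/
def coordFactor (m : ℕ) (i : Fin m) : LieSubalgebra ℝ (⨁ _ : Fin m, so3) :=
  { carrier := {x : ⨁ _ : Fin m, so3 | ∀ j, j ≠ i → x j = 0}
    add_mem' := by
      intro x y hx hy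
      simp only [Set.mem_setOf_eq] at *
      intro j hj
      rw [DirectSum.add_apply, hx j hj, hy j hj, add_zero]
    zero_mem' := by
      simp only [Set.mem_setOf_eq]
      intro j hj
      rfl
    smul_mem' := by
      intro c x hx
      simp only [Set.mem_setOf_eq] at *
      intro j hj
      rw [DirectSum.smul_apply, hx j hj, smul_zero]
    lie_mem' := by
      intro x y hx hy
      simp only [Set.mem_setOf_eq] at *
      intro j hj
      rw [DirectSum.bracket_apply, hx j hj, zero_lie] }

section Aux

lemma mem_so3 {A : Matrix (Fin 3) (Fin 3) ℝ} : A ∈ so3 ↔ Aᵀ = -A := Iff.rfl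

def hatM (v : Fin 3 → ℝ) : Matrix (Fin 3) (Fin 3) ℝ :=
  !![0, -v 2, v 1; v 2, 0, -v 0; -v 1, v 0, 0]

lemma hatM_skew (v : Fin 3 → ℝ) : (hatM v)ᵀ = -(hatM v) := by
  ext i j; fin_cases i <;> fin_cases j <;> simp [hatM, Matrix.transpose_apply]

lemma hatM_zero : hatM 0 = 0 := by
  ext i j; fin_cases i <;> fin_cases j <;> simp [hatM, Matrix.vecHead, Matrix.vecTail]

lemma hatM_smul (c : ℝ) (v : Fin 3 → ℝ) : hatM (c • v) = c • hatM v := by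
  ext i j; fin_cases i <;> fin_cases j <;> simp [hatM, Matrix.vecHead, Matrix.vecTail]

lemma skew_eq_hatM {A : Matrix (Fin 3) (Fin 3) ℝ} (hA : Aᵀ = -A) :
    A = hatM ![A 2 1, A 0 2, A 1 0] := by
  have h : ∀ i j, A j i = -A i j := fun i j => by
    have := congrFun (congrFun hA i) j; simpa [Matrix.transpose_apply] using this
  ext i j
  fin_cases i <;> fin_cases j <;>
    simp [hatM] <;>
    first
      | (have := h 0 0; linarith)
      | (have := h 1 1; linarith)
      | (have := h 2 2; linarith)
      | (have := h 0 1; linarith)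
      | (have := h 0 2; linarith)
      | (have := h 1 2; linarith)

def cross3 (u v : Fin 3 → ℝ) : Fin 3 → ℝ :=
  ![u 1 * v 2 - u 2 * v 1, u 2 * v 0 - u 0 * v 2, u 0 * v 1 - u 1 * v 0]

lemma hatM_mul_sub (u v : Fin 3 → ℝ) :
    hatM u * hatM v - hatM v * hatM u = hatM (cross3 u v) := by
  ext i j
  fin_cases i <;> fin_cases j <;>
    simp [hatM, cross3, Matrix.mul_apply, Fin.sum_univ_three] <;> ring

lemma hatM_inj {u : Fin 3 → ℝ} (h : hatM u = 0) : u = 0 := by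
  funext j
  fin_cases j
  · simpa [hatM] using congrFun (congrFun h 2) 1
  · simpa [hatM] using congrFun (congrFun h 0) 2
  · simpa [hatM] using congrFun (congrFun h 1) 0

lemma cross3_zero {u v : Fin 3 → ℝ} (hv : v ≠ 0) (h : cross3 u v = 0) :
    ∃ c : ℝ, u = c • v := by
  have h0 := congrFun h 0
  have h1 := congrFun h 1
  have h2 := congrFun h 2
  simp [cross3] at h0 h1 h2
  rw [Function.ne_iff] at hv
  obtain ⟨i, hi⟩ := hv
  fin_cases i <;> simp only [Pi.zero_apply] at hi
  · have hi0 : v 0 ≠ 0 := hi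
    refine ⟨u 0 / v 0, ?_⟩
    funext j
    fin_cases j <;> simp <;> rw [div_mul_eq_mul_div, eq_div_iff hi0] <;> linarith
  · have hi0 : v 1 ≠ 0 := hi
    refine ⟨u 1 / v 1, ?_⟩
    funext j
    fin_cases j <;> simp <;> rw [div_mul_eq_mul_div, eq_div_iff hi0] <;> linarith
  · have hi0 : v 2 ≠ 0 := hi
    refine ⟨u 2 / v 2, ?_⟩
    funext j
    fin_cases j <;> simp <;> rw [div_mul_eq_mul_div, eq_div_iff hi0] <;> linarith

/-- In `so(3)`, anything commuting with a nonzero element is a multiple of it. -/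
lemma so3_comm {A B : Matrix (Fin 3) (Fin 3) ℝ} (hA : Aᵀ = -A) (hB : Bᵀ = -B)
    (hA0 : A ≠ 0) (h : B * A - A * B = 0) : ∃ c : ℝ, B = c • A := by
  have hA' := skew_eq_hatM hA
  have hB' := skew_eq_hatM hB
  set a := ![A 2 1, A 0 2, A 1 0]
  set b := ![B 2 1, B 0 2, B 1 0]
  have hc : hatM (cross3 b a) = 0 := by rw [← hatM_mul_sub, ← hA', ← hB', h]
  have ha0 : a ≠ 0 := fun h0 => hA0 (by rw [hA', h0, hatM_zero])
  obtain ⟨c, hcb⟩ := cross3_zero ha0 (hatM_inj hc)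
  exact ⟨c, by rw [hB', hcb, hatM_smul, ← hA']⟩

/-- `so3` is linearly equivalent to `ℝ³`. -/
noncomputable def so3Equiv : (Fin 3 → ℝ) ≃ₗ[ℝ] so3 where
  toFun v := ⟨hatM v, hatM_skew v⟩
  map_add' u v := Subtype.ext (by
    show hatM (u + v) = hatM u + hatM v
    ext i j; fin_cases i <;> fin_cases j <;> simp [hatM] <;> ring)
  map_smul' c v := Subtype.ext (by show hatM (c • v) = c • hatM v; exact hatM_smul c v)
  invFun A := ![A.1 2 1, A.1 0 2, A.1 1 0]
  left_inv v := by funext j; fin_cases j <;> simp [hatM]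
  right_inv A := Subtype.ext (skew_eq_hatM A.2).symm

instance : FiniteDimensional ℝ so3 := Module.Finite.equiv so3Equiv

lemma finrank_so3 : Module.finrank ℝ so3 = 3 := by
  rw [← so3Equiv.finrank_eq, Module.finrank_pi]
  simp

instance (m : ℕ) : Module.Finite ℝ (⨁ _ : Fin m, so3) :=
  Module.Finite.equiv (DirectSum.linearEquivFunOnFintype ℝ (Fin m) (fun _ => so3)).symm

end Aux

/-- The centralizer `{y : ⁅y, k⁆ = 0 for all k ∈ K}` of a Lie subalgebra `K`, as a
submodule. -/
def centralizerSubmodule (L : Type*) [LieRing L] [LieAlgebra ℝ L]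
    (K : LieSubalgebra ℝ L) : Submodule ℝ L :=
  { carrier := {y : L | ∀ k ∈ K, ⁅y, k⁆ = 0}
    add_mem' := by
      intro a b ha hb
      simp only [Set.mem_setOf_eq] at *
      intro k hk
      rw [add_lie, ha k hk, hb k hk, add_zero]
    zero_mem' := by
      simp only [Set.mem_setOf_eq]
      intro k hk
      rw [zero_lie]
    smul_mem' := by
      intro c a ha
      simp only [Set.mem_setOf_eq] at *
      intro k hk
      rw [smul_lie, ha k hk, smul_zero] }

section Aux2

/-- `so3` embeds into the `i`-th coordinate factor as a linear equivalence. -/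
noncomputable def coordEquiv (m : ℕ) (i : Fin m) : so3 ≃ₗ[ℝ] (coordFactor m i) where
  toFun A := ⟨DirectSum.lof ℝ (Fin m) (fun _ => so3) i A, fun j hj => by
    rw [DirectSum.lof_eq_of, DirectSum.of_eq_of_ne _ _ _ hj]⟩
  map_add' x y := Subtype.ext (map_add _ x y)
  map_smul' c x := Subtype.ext (map_smul _ c x)
  invFun x := x.1 i
  left_inv A := DirectSum.lof_apply ℝ (M := fun _ : Fin m => so3) i A
  right_inv x := by
    apply Subtype.ext
    refine DirectSum.ext fun j => ?_
    show (DirectSum.lof ℝ (Fin m) (fun _ => so3) i (x.1 i)) j = x.1 j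
    by_cases hj : j = i
    · subst hj; exact DirectSum.lof_apply ℝ (M := fun _ : Fin m => so3) j (x.1 j)
    · rw [DirectSum.lof_eq_of, DirectSum.of_eq_of_ne _ _ _ hj, x.2 j hj]

lemma finrank_coordFactor (m : ℕ) (i : Fin m) :
    Module.finrank ℝ (coordFactor m i) = 3 :=
  ((coordEquiv m i).symm.finrank_eq).trans finrank_so3

/-- The centralizer of the `i`-th projection of `K`, inside `so3`. -/
def Ci (m : ℕ) (K : LieSubalgebra ℝ (⨁ _ : Fin m, so3)) (i : Fin m) : Submodule ℝ so3 where
  carrier := {B : so3 | ∀ k ∈ K, ⁅B, k i⁆ = 0}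
  add_mem' := by
    intro a b ha hb k hk
    rw [add_lie, ha k hk, hb k hk, add_zero]
  zero_mem' := by
    intro k hk
    rw [zero_lie]
  smul_mem' := by
    intro c a ha k hk
    rw [smul_lie, ha k hk, smul_zero]

end Aux2

/-- in the direct product of `m` copies of `so(3,ℝ)`, a 3-dimensional Lie
subalgebra whose centralizer has dimension `3(m−1)` is one of the coordinate factors. -/
theorem coordinate_factors_canonical (m : ℕ) (hm : 1 ≤ m)
    (K : LieSubalgebra ℝ (⨁ _ : Fin m, so3))
    (hK : Module.finrank ℝ K = 3)
    (hC : Module.finrank ℝ (centralizerSubmodule (⨁ _ : Fin m, so3) K) = 3 * (m - 1)) :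
    ∃ i : Fin m, K = coordFactor m i := by
  classical
  -- the injection of the centralizer into the product of the coordinate centralizers
  let Φ : centralizerSubmodule (⨁ _ : Fin m, so3) K →ₗ[ℝ] (∀ i, Ci m K i) :=
    { toFun := fun y => fun i => ⟨y.1 i, fun k hk => by
        have h := y.2 k hk
        rw [← DirectSum.bracket_apply, h, DirectSum.zero_apply]⟩
      map_add' := fun a b => by
        funext i
        exact Subtype.ext (DirectSum.add_apply a.1 b.1 i)
      map_smul' := fun c a => by
        funext i
        exact Subtype.ext (DirectSum.smul_apply c a.1 i) }
  have hΦinj : Function.Injective Φ := by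
    intro a b hab
    apply Subtype.ext
    refine DirectSum.ext fun j => ?_
    exact congrArg Subtype.val (congrFun hab j)
  have hsum : Module.finrank ℝ (centralizerSubmodule (⨁ _ : Fin m, so3) K)
      ≤ ∑ i, Module.finrank ℝ (Ci m K i) := by
    have := LinearMap.finrank_le_finrank_of_injective hΦinj
    rwa [Module.finrank_pi_fintype] at this
  -- per-coordinate dimension bounds
  have h3 : ∀ i, Module.finrank ℝ (Ci m K i) ≤ 3 := fun i => by
    have := (Ci m K i).finrank_le
    rwa [finrank_so3] at this
  have h1 : ∀ i : Fin m, (∃ k ∈ K, k i ≠ 0) → Module.finrank ℝ (Ci m K i) ≤ 1 := by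
    rintro i ⟨k, hk, hki⟩
    have hle : Ci m K i ≤ Submodule.span ℝ {k i} := by
      intro B hB
      have hbr : ⁅B, k i⁆ = 0 := hB k hk
      have hcomm : (B : Matrix (Fin 3) (Fin 3) ℝ) * (k i : Matrix (Fin 3) (Fin 3) ℝ)
          - (k i : Matrix (Fin 3) (Fin 3) ℝ) * (B : Matrix (Fin 3) (Fin 3) ℝ) = 0 := by
        have h0 : ((⁅B, k i⁆ : so3) : Matrix (Fin 3) (Fin 3) ℝ) = 0 := by
          rw [hbr]; rfl
        rwa [LieSubalgebra.coe_bracket, Ring.lie_def] at h0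
      obtain ⟨c, hc⟩ := so3_comm (k i).2 B.2 (fun h0 => hki (Subtype.ext h0)) hcomm
      refine Submodule.mem_span_singleton.mpr ⟨c, ?_⟩
      apply Subtype.ext
      exact hc.symm
    calc Module.finrank ℝ (Ci m K i) ≤ Module.finrank ℝ (Submodule.span ℝ {k i}) :=
          Submodule.finrank_mono hle
      _ = 1 := finrank_span_singleton hki
  -- the support of K
  set S : Finset (Fin m) := Finset.univ.filter (fun i => ∃ k ∈ K, k i ≠ 0) with hS
  have hmemS : ∀ i : Fin m, i ∈ S ↔ ∃ k ∈ K, k i ≠ 0 := by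
    intro i
    simp [hS]
  have hSne : S.Nonempty := by
    by_contra h0
    have hall : ∀ k ∈ K, k = 0 := by
      intro k hk
      refine DirectSum.ext fun j => ?_
      by_contra hkj
      exact h0 ⟨j, (hmemS j).mpr ⟨k, hk, hkj⟩⟩
    have hbot : (K : Submodule ℝ (⨁ _ : Fin m, so3)) = ⊥ := by
      rw [Submodule.eq_bot_iff]
      intro x hx
      exact hall x hx
    have : Module.finrank ℝ K = 0 := by
      have heq : Module.finrank ℝ K = Module.finrank ℝ (K : Submodule ℝ (⨁ _ : Fin m, so3)) := rfl
      rw [heq, hbot, finrank_bot]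
    omega
  -- counting
  have hcount : ∑ i, Module.finrank ℝ (Ci m K i) ≤ S.card * 1 + (m - S.card) * 3 := by
    rw [← Finset.sum_add_sum_compl S (fun i => Module.finrank ℝ (Ci m K i))]
    have hA : ∑ i ∈ S, Module.finrank ℝ (Ci m K i) ≤ S.card * 1 := by
      have := Finset.sum_le_card_nsmul S (fun i => Module.finrank ℝ (Ci m K i)) 1
        (fun i hi => h1 i ((hmemS i).mp hi))
      simpa using this
    have hB : ∑ i ∈ Sᶜ, Module.finrank ℝ (Ci m K i) ≤ (m - S.card) * 3 := by
      have := Finset.sum_le_card_nsmul Sᶜ (fun i => Module.finrank ℝ (Ci m K i)) 3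
        (fun i _ => h3 i)
      rw [Finset.card_compl, Fintype.card_fin] at this
      simpa [smul_eq_mul] using this
    exact Nat.add_le_add hA hB
  have hScard : S.card ≤ m := by
    have := Finset.card_le_univ S
    simpa using this
  have hcard1 : S.card = 1 := by
    have h30 := hsum
    rw [hC] at h30
    have := le_trans h30 hcount
    have h1S : 1 ≤ S.card := Finset.card_pos.mpr hSne
    omega
  obtain ⟨i, hSi⟩ := Finset.card_eq_one.mp hcard1
  refine ⟨i, ?_⟩
  -- K is contained in the i-th coordinate factor
  have hle : (K : Submodule ℝ (⨁ _ : Fin m, so3)) ≤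
      (coordFactor m i : Submodule ℝ (⨁ _ : Fin m, so3)) := by
    intro k hk
    rw [LieSubalgebra.mem_toSubmodule] at hk ⊢
    intro j hj
    by_contra hkj
    have hjS : j ∈ S := (hmemS j).mpr ⟨k, hk, hkj⟩
    rw [hSi, Finset.mem_singleton] at hjS
    exact hj hjS
  have heq : (K : Submodule ℝ (⨁ _ : Fin m, so3)) =
      (coordFactor m i : Submodule ℝ (⨁ _ : Fin m, so3)) := by
    refine Submodule.eq_of_le_of_finrank_le hle ?_
    have hcf : Module.finrank ℝ
        ((coordFactor m i : Submodule ℝ (⨁ _ : Fin m, so3))) = 3 :=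
      finrank_coordFactor m i
    have hKs : Module.finrank ℝ ((K : Submodule ℝ (⨁ _ : Fin m, so3))) = 3 := hK
    omega
  rw [← LieSubalgebra.toSubmodule_inj]
  exact heq
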